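/- Every hypercentral group is locally nilpotent: if G is a group with Z_α(G) = G for some ordinal α, then every finitely generated subgroup of G is nilpotent. -/

import Mathlib

open Ordinal
open scoped commutatorElement

section Defs
variable {G : Type*} [Group G]

attribute [local instance] Classical.propDecidable

/-- The commutator `[x,y] = x⁻¹y⁻¹xy` as in the paper. -/
def pcomm (x y : G) : G := x⁻¹ * y⁻¹ * x * y

/-- Transfinite upper central series of the (sub)set `E` of `G`, viewed inside `G`. -/
noncomputable def ZSet (E : Set G) (α : Ordinal) : Set G :=
  if α = 0 then {1}
  else if hs : ∃ β < α, α = β + 1 then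
    {x | x ∈ E ∧ ∀ g ∈ E, pcomm x g ∈ ZSet E hs.choose}
  else ⋃ (β : Ordinal) (_ : β < α), ZSet E β
termination_by α
decreasing_by all_goals first | assumption | exact hs.choose_spec.1

/-- Transfinite iterated centralizers `C_E^α(H)` of `H` inside the ambient set `E ⊆ G`. -/
noncomputable def CIter (E H : Set G) (α : Ordinal) : Set G :=
  if α = 0 then {1}
  else if hs : ∃ β < α, α = β + 1 then
    {x | x ∈ E ∧ (∀ β < α, ∀ a : G, a ∈ CIter E H β ↔ x * a * x⁻¹ ∈ CIter E H β)
       ∧ ∀ h ∈ H, pcomm x h ∈ CIter E H hs.choose}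
  else ⋃ (β : Ordinal) (_ : β < α), CIter E H β
termination_by α
decreasing_by all_goals first | assumption | exact hs.choose_spec.1

/-- Transfinite envelopes `E_α(H)` of `H ⊆ G`. -/
noncomputable def Env (H : Set G) (α : Ordinal) : Set G :=
  if α = 0 then Set.univ
  else if hs : ∃ β < α, α = β + 1 then
    {g | g ∈ Env H hs.choose ∧
      ∀ c ∈ CIter (Env H hs.choose) H (hs.choose + 1),
        pcomm g c ∈ CIter (Env H hs.choose) H hs.choose}
  else ⋂ (β : Ordinal) (_ : β < α), Env H β
termination_by α
decreasing_by all_goals first | assumption | exact hs.choose_spec.1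

end Defs

section ZLemmas
variable {G : Type*} [Group G]

lemma ZSet_zero : ZSet (Set.univ : Set G) 0 = {1} := by
  rw [ZSet]; simp

lemma mem_ZSet_succ {β : Ordinal} {x : G} :
    x ∈ ZSet (Set.univ : Set G) (β + 1) ↔ ∀ g : G, pcomm x g ∈ ZSet (Set.univ : Set G) β := by
  have h1 : β < β + 1 := by rw [Ordinal.add_one_eq_succ]; exact Order.lt_succ β
  have h0 : β + 1 ≠ 0 := by
    intro h; rw [h] at h1; exact not_lt_zero h1
  have hs : ∃ γ < β + 1, β + 1 = γ + 1 := ⟨β, h1, rfl⟩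
  rw [ZSet, if_neg h0, dif_pos hs]
  have he : hs.choose = β := by
    have h2 := hs.choose_spec.2
    have ha : hs.choose ≤ β :=
      Order.lt_succ_iff.mp (lt_of_lt_of_le hs.choose_spec.1 (le_of_eq (Ordinal.add_one_eq_succ β)))
    have hb : β ≤ hs.choose := by
      have h4 : β < hs.choose + 1 := h2 ▸ h1
      exact Order.lt_succ_iff.mp (lt_of_lt_of_le h4 (le_of_eq (Ordinal.add_one_eq_succ _)))
    exact le_antisymm ha hb
  rw [he]
  simp [Set.mem_setOf_eq]

lemma mem_ZSet_limit {α : Ordinal} (hα : Order.IsSuccLimit α) {x : G} :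
    x ∈ ZSet (Set.univ : Set G) α ↔ ∃ β < α, x ∈ ZSet (Set.univ : Set G) β := by
  have h0 : α ≠ 0 := hα.ne_bot
  have hs : ¬ ∃ β < α, α = β + 1 := by
    rintro ⟨β, hβ, rfl⟩
    have := hα.succ_lt hβ
    rw [Ordinal.add_one_eq_succ] at this
    exact absurd this (lt_irrefl _)
  rw [ZSet, if_neg h0, dif_neg hs]
  simp [Set.mem_iUnion]

lemma pcomm_one_left (g : G) : pcomm (1:G) g = 1 := by simp [pcomm]

lemma pcomm_mem_ZSet : ∀ α : Ordinal, ∀ x ∈ ZSet (Set.univ : Set G) α, ∀ g : G,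
    pcomm x g ∈ ZSet (Set.univ : Set G) α := by
  intro α
  induction α using Ordinal.induction with
  | h α IH =>
    rcases Ordinal.zero_or_succ_or_isSuccLimit α with h0 | ⟨β, hβ⟩ | hlim
    · subst h0
      intro x hx g
      rw [ZSet_zero] at hx ⊢
      simp only [Set.mem_singleton_iff] at hx ⊢
      subst hx; exact pcomm_one_left g
    · have hβ' : α = β + 1 := by rw [Ordinal.add_one_eq_succ]; exact hβ.symm
      subst hβ'
      intro x hx g
      rw [mem_ZSet_succ] at hx ⊢
      intro g'
      exact IH β (by rw [Ordinal.add_one_eq_succ]; exact Order.lt_succ β) _ (hx g) g'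
    · intro x hx g
      rw [mem_ZSet_limit hlim] at hx ⊢
      obtain ⟨β, hβα, hxβ⟩ := hx
      exact ⟨β, hβα, IH β hβα x hxβ g⟩

lemma ZSet_le_succ {β : Ordinal} : ZSet (Set.univ : Set G) β ⊆ ZSet (Set.univ : Set G) (β + 1) := by
  intro x hx
  rw [mem_ZSet_succ]
  exact fun g => pcomm_mem_ZSet β x hx g

lemma ZSet_mono : ∀ α : Ordinal, ∀ γ ≤ α, ZSet (Set.univ : Set G) γ ⊆ ZSet (Set.univ : Set G) α := by
  intro α
  induction α using Ordinal.induction with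
  | h α IH =>
    intro γ hγ
    rcases eq_or_lt_of_le hγ with rfl | hlt
    · exact subset_rfl
    rcases Ordinal.zero_or_succ_or_isSuccLimit α with h0 | ⟨β, hβ⟩ | hlim
    · subst h0; exact absurd hlt (not_lt_zero (a := γ))
    · have hβ' : α = β + 1 := by rw [Ordinal.add_one_eq_succ]; exact hβ.symm
      subst hβ'
      have hγβ : γ ≤ β := by
        exact Order.lt_succ_iff.mp (lt_of_lt_of_le hlt (le_of_eq (Ordinal.add_one_eq_succ β)))
      have hβlt : β < β + 1 := by rw [Ordinal.add_one_eq_succ]; exact Order.lt_succ β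
      exact (IH β hβlt γ hγβ).trans ZSet_le_succ
    · intro x hx
      rw [mem_ZSet_limit hlim]
      exact ⟨γ, hlt, hx⟩

lemma one_mem_ZSet (α : Ordinal) : (1:G) ∈ ZSet (Set.univ : Set G) α := by
  apply ZSet_mono α 0 (zero_le (a := α))
  rw [ZSet_zero]; rfl

lemma inv_mem_ZSet : ∀ α : Ordinal, ∀ x ∈ ZSet (Set.univ : Set G) α,
    x⁻¹ ∈ ZSet (Set.univ : Set G) α := by
  intro α
  induction α using Ordinal.induction with
  | h α IH =>
    rcases Ordinal.zero_or_succ_or_isSuccLimit α with h0 | ⟨β, hβ⟩ | hlim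
    · subst h0
      intro x hx
      rw [ZSet_zero] at hx ⊢
      simp only [Set.mem_singleton_iff] at hx ⊢
      rw [hx]; exact inv_one
    · have hβ' : α = β + 1 := by rw [Ordinal.add_one_eq_succ]; exact hβ.symm
      subst hβ'
      have hβlt : β < β + 1 := by rw [Ordinal.add_one_eq_succ]; exact Order.lt_succ β
      intro x hx
      rw [mem_ZSet_succ] at hx ⊢
      intro g
      have hid : pcomm x⁻¹ g = (pcomm x (x * g * x⁻¹))⁻¹ := by
        simp only [pcomm]; group
      rw [hid]
      exact IH β hβlt _ (hx (x * g * x⁻¹))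
    · intro x hx
      rw [mem_ZSet_limit hlim] at hx ⊢
      obtain ⟨β, hβα, hxβ⟩ := hx
      exact ⟨β, hβα, IH β hβα x hxβ⟩

lemma commutator_mem_ZSet {δ : Ordinal} {x : G} (hx : x ∈ ZSet (Set.univ : Set G) (δ + 1))
    (g : G) : ⁅x, g⁆ ∈ ZSet (Set.univ : Set G) δ := by
  have hxi : x⁻¹ ∈ ZSet (Set.univ : Set G) (δ + 1) := inv_mem_ZSet _ x hx
  rw [mem_ZSet_succ] at hxi
  have : ⁅x, g⁆ = pcomm x⁻¹ g⁻¹ := by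
    simp [pcomm, commutatorElement_def]
  rw [this]
  exact hxi g⁻¹

end ZLemmas

section Aux
variable {H : Type*} [Group H]

/-- One commutation step on generating sets. -/
def commSet (X : Finset H) (S : Set H) : Set H :=
  {z | ∃ a ∈ S, ∃ x ∈ (X : Set H), z = ⁅a, x⁆}

lemma commSet_finite (X : Finset H) {S : Set H} (hS : S.Finite) :
    (commSet X S).Finite := by
  have : commSet X S = Set.image2 (fun a x => ⁅a, x⁆) S (X : Set H) := by
    ext z
    simp [commSet, Set.mem_image2, eq_comm]
  rw [this]
  exact Set.Finite.image2 _ hS X.finite_toSet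

example : (Subgroup.center H).Normal := inferInstance

lemma commutator_normalClosure_le (X : Finset H) (hX : Subgroup.closure (X : Set H) = ⊤)
    (S : Set H) :
    ⁅Subgroup.normalClosure S, (⊤ : Subgroup H)⁆ ≤ Subgroup.normalClosure (commSet X S) := by
  set R := Subgroup.normalClosure (commSet X S) with hR
  haveI : R.Normal := Subgroup.normalClosure_normal
  set π := QuotientGroup.mk' R with hπ
  have hker : ∀ z : H, π z = 1 ↔ z ∈ R := fun z => QuotientGroup.eq_one_iff z
  have hcent : ∀ s ∈ S, π s ∈ Subgroup.center (H ⧸ R) := by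
    intro s hs
    rw [Subgroup.mem_center_iff]
    have hsub : Subgroup.closure (X : Set H) ≤
        Subgroup.comap π (Subgroup.centralizer {π s}) := by
      rw [Subgroup.closure_le]
      intro x hx
      simp only [SetLike.mem_coe, Subgroup.mem_comap, Subgroup.mem_centralizer_iff]
      intro h hh
      rw [Set.mem_singleton_iff] at hh
      subst hh
      have hmem : ⁅s, x⁆ ∈ R := Subgroup.subset_normalClosure ⟨s, hs, x, hx, rfl⟩
      have : π ⁅s, x⁆ = 1 := (hker _).mpr hmem
      rw [map_commutatorElement] at this
      exact (commutatorElement_eq_one_iff_mul_comm.mp this)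
    intro q
    obtain ⟨b, rfl⟩ := QuotientGroup.mk'_surjective R q
    have hb : b ∈ Subgroup.closure (X : Set H) := by rw [hX]; trivial
    have := hsub hb
    rw [Subgroup.mem_comap, Subgroup.mem_centralizer_iff] at this
    exact (this (π s) rfl).symm
  have hC : Subgroup.normalClosure S ≤
      Subgroup.comap π (Subgroup.center (H ⧸ R)) := by
    haveI : (Subgroup.comap π (Subgroup.center (H ⧸ R))).Normal :=
      Subgroup.Normal.comap inferInstance π
    apply Subgroup.normalClosure_le_normal
    intro s hs
    exact hcent s hs
  rw [Subgroup.commutator_le]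
  intro g hg b _
  have hgc : π g ∈ Subgroup.center (H ⧸ R) := hC hg
  have : π ⁅g, b⁆ = 1 := by
    rw [map_commutatorElement, commutatorElement_eq_one_iff_mul_comm]
    exact (Subgroup.mem_center_iff.mp hgc (π b)).symm
  exact (hker _).mp this

/-- iterated commutator generating sets -/
def Dset (X : Finset H) : ℕ → Set H
  | 0 => (X : Set H)
  | n + 1 => commSet X (Dset X n)

lemma Dset_finite (X : Finset H) : ∀ n, (Dset X n).Finite
  | 0 => X.finite_toSet
  | n + 1 => commSet_finite X (Dset_finite X n)

lemma lcs_le_normalClosure_Dset (X : Finset H) (hX : Subgroup.closure (X : Set H) = ⊤) :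
    ∀ n, (⊤ : Subgroup H).lowerCentralSeries n ≤ Subgroup.normalClosure (Dset X n) := by
  intro n
  induction n with
  | zero =>
    rw [lowerCentralSeries_zero, ← hX]
    exact Subgroup.closure_le_normalClosure
  | succ n IH =>
    rw [lowerCentralSeries_succ]
    calc ⁅(⊤ : Subgroup H).lowerCentralSeries n, (⊤ : Subgroup H)⁆
        ≤ ⁅Subgroup.normalClosure (Dset X n), (⊤ : Subgroup H)⁆ :=
          Subgroup.commutator_mono IH le_rfl
      _ ≤ Subgroup.normalClosure (Dset X (n + 1)) :=
          commutator_normalClosure_le X hX (Dset X n)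

theorem aux_nilpotent (ht : H → Ordinal)
    (h0 : ∀ a : H, ht a = 0 ↔ a = 1)
    (hd : ∀ a b : H, a ≠ 1 → ht ⁅a, b⁆ < ht a)
    (X : Finset H) (hX : Subgroup.closure (X : Set H) = ⊤) : Group.IsNilpotent H := by
  classical
  set m : ℕ → Ordinal := fun n => sSup (ht '' Dset X n) with hm
  have hbdd : ∀ n, BddAbove (ht '' Dset X n) := fun n =>
    ((Dset_finite X n).image ht).bddAbove
  have hle : ∀ n, ∀ d ∈ Dset X n, ht d ≤ m n := by
    intro n d hd'
    exact le_csSup (hbdd n) ⟨d, hd', rfl⟩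
  have hdrop : ∀ n, m n ≠ 0 → m (n + 1) < m n := by
    intro n hn
    have hpos : 0 < m n := pos_iff_ne_zero.mpr hn
    rcases Set.eq_empty_or_nonempty (Dset X (n + 1)) with he | hne
    · have : m (n + 1) = 0 := by
        simp [hm, he, csSup_empty]
      rw [this]; exact hpos
    · have himg : (ht '' Dset X (n + 1)).Nonempty := hne.image ht
      have hmem : m (n + 1) ∈ ht '' Dset X (n + 1) :=
        Set.Nonempty.csSup_mem himg ((Dset_finite X (n + 1)).image ht)
      obtain ⟨z, hz, hzm⟩ := hmem
      obtain ⟨a, ha, x, hx, rfl⟩ := hz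
      rw [← hzm]
      by_cases hA : a = 1
      · subst hA
        have : ⁅(1 : H), x⁆ = 1 := by group
        rw [this]
        rw [(h0 (1 : H)).mpr rfl]
        exact hpos
      · exact lt_of_lt_of_le (hd a x hA) (hle n a ha)
  have hterm : ∃ n, m n = 0 := by
    by_contra hcon
    push_neg at hcon
    have hne : (Set.range m).Nonempty := ⟨m 0, 0, rfl⟩
    have hmem := csInf_mem hne
    obtain ⟨n₀, hn₀⟩ := hmem
    have h1 : m (n₀ + 1) < m n₀ := hdrop n₀ (hcon n₀)
    have h2 : m n₀ ≤ m (n₀ + 1) := by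
      rw [hn₀] at *
      exact csInf_le (OrderBot.bddBelow _) ⟨n₀ + 1, rfl⟩
    exact absurd (lt_of_le_of_lt h2 h1) (lt_irrefl _)
  obtain ⟨n₀, hn₀⟩ := hterm
  rw [nilpotent_iff_lowerCentralSeries]
  refine ⟨n₀, ?_⟩
  have hsub : Dset X n₀ ⊆ ((⊥ : Subgroup H) : Set H) := by
    intro d hd'
    have : ht d ≤ 0 := hn₀ ▸ hle n₀ d hd'
    have : ht d = 0 := nonpos_iff_eq_zero.mp this
    simp [Subgroup.mem_bot, (h0 d).mp this]
  have : Subgroup.normalClosure (Dset X n₀) ≤ ⊥ :=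
    Subgroup.normalClosure_le_normal hsub
  exact le_bot_iff.mp ((lcs_le_normalClosure_Dset X hX n₀).trans this)

end Aux

/-- every hypercentral group is locally nilpotent. -/
theorem stmt16 {G : Type*} [Group G] (α : Ordinal)
    (h : ZSet (Set.univ : Set G) α = Set.univ) :
    ∀ K : Subgroup G, K.FG → Group.IsNilpotent K := by
  classical
  intro K hKfg
  -- the height function on G
  set ht : G → Ordinal := fun x => sInf {γ | x ∈ ZSet (Set.univ : Set G) γ} with hht
  have hne : ∀ x : G, {γ | x ∈ ZSet (Set.univ : Set G) γ}.Nonempty := by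
    intro x
    exact ⟨α, by rw [Set.mem_setOf_eq, h]; trivial⟩
  have hmem : ∀ x : G, x ∈ ZSet (Set.univ : Set G) (ht x) := fun x => csInf_mem (hne x)
  have hle : ∀ x : G, ∀ γ, x ∈ ZSet (Set.univ : Set G) γ → ht x ≤ γ := by
    intro x γ hγ
    exact csInf_le (OrderBot.bddBelow _) hγ
  have h0 : ∀ x : G, ht x = 0 ↔ x = 1 := by
    intro x
    constructor
    · intro hx
      have := hmem x
      rw [hx, ZSet_zero] at this
      exact this
    · intro hx
      subst hx
      exact nonpos_iff_eq_zero.mp (hle 1 0 (by rw [ZSet_zero]; rfl)) ▸ rfl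
  have hsucc : ∀ x : G, x ≠ 1 → ∃ δ, ht x = δ + 1 := by
    intro x hx
    rcases Ordinal.zero_or_succ_or_isSuccLimit (ht x) with hz | ⟨δ, hδ⟩ | hlim
    · exact absurd ((h0 x).mp hz) hx
    · exact ⟨δ, by rw [Ordinal.add_one_eq_succ]; exact hδ.symm⟩
    · exfalso
      have := hmem x
      rw [mem_ZSet_limit hlim] at this
      obtain ⟨β, hβ, hxβ⟩ := this
      exact absurd (lt_of_le_of_lt (hle x β hxβ) hβ) (lt_irrefl _)
  have hdrop : ∀ a b : G, a ≠ 1 → ht ⁅a, b⁆ < ht a := by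
    intro a b ha
    obtain ⟨δ, hδ⟩ := hsucc a ha
    have hmema : a ∈ ZSet (Set.univ : Set G) (δ + 1) := hδ ▸ hmem a
    have hc : ⁅a, b⁆ ∈ ZSet (Set.univ : Set G) δ := commutator_mem_ZSet hmema b
    have h1 : ht ⁅a, b⁆ ≤ δ := hle _ _ hc
    have h2 : δ < δ + 1 := by rw [Ordinal.add_one_eq_succ]; exact Order.lt_succ δ
    rw [hδ]
    exact lt_of_le_of_lt h1 h2
  -- transfer to the subgroup
  haveI : Group.FG K := (Group.fg_iff_subgroup_fg K).mpr hKfg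
  obtain ⟨S, hS, hSfin⟩ := Group.fg_iff.mp this
  refine aux_nilpotent (fun a : K => ht (a : G)) ?_ ?_ hSfin.toFinset ?_
  · intro a
    rw [h0 (a : G)]
    exact ⟨fun hh => Subtype.ext hh, fun hh => by rw [hh]; rfl⟩
  · intro a b ha
    have ha' : (a : G) ≠ 1 := by
      intro hh
      exact ha (Subtype.ext hh)
    have hcomm : ((⁅a, b⁆ : K) : G) = ⁅(a : G), (b : G)⁆ := by
      simp [commutatorElement_def]
    show ht ((⁅a, b⁆ : K) : G) < ht (a : G)
    rw [hcomm]
    exact hdrop _ _ ha'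
  · rw [Set.Finite.coe_toFinset]
    exact hS
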